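/- Let P be a finite distributive lattice, 𝔽 a field, and F : P → Vec_𝔽 a projective object in Fun(P, Vec_𝔽). Then F is monomorphic (sends every relation x ≤ y to an injective linear map) and for all x, y ∈ P the square F(x∧y), F(x), F(y), F(x∨y) is a pullback square. -/

import Mathlib

open CategoryTheory CategoryTheory.Limits

namespace ProjFunAux

variable {P : Type*} [Lattice P] [Fintype P] {𝔽 : Type*} [Field 𝔽]
variable (F : P ⥤ ModuleCat 𝔽)

set_option linter.unusedSectionVars false

attribute [local instance] Classical.propDecidable

/-- An enumeration of `P` by a small type. -/
noncomputable def idx : Fin (Fintype.card P) ≃ P := (Fintype.equivFin P).symm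

/-- The submodule of the big product supported on the principal downset of `z`. -/
noncomputable def S (z : P) : Submodule 𝔽 (Π i : Fin (Fintype.card P), F.obj (idx i)) :=
  Submodule.pi {i | ¬ idx i ≤ z} (fun _ => ⊥)

lemma mem_S {z : P} {f : Π i : Fin (Fintype.card P), F.obj (idx i)} :
    f ∈ S F z ↔ ∀ i, ¬ idx i ≤ z → f i = 0 := by
  simp [S, Submodule.mem_pi]

lemma S_mono {z z' : P} (h : z ≤ z') : S F z ≤ S F z' := fun f hf => by
  rw [mem_S] at hf ⊢
  exact fun i hi => hf i (fun hiz => hi (hiz.trans h))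

/-- The "free" functor whose value at `z` is the direct sum of the `F x` over `x ≤ z`. -/
noncomputable def G : P ⥤ ModuleCat 𝔽 where
  obj z := ModuleCat.of 𝔽 (S F z)
  map {z z'} h := ModuleCat.ofHom (Submodule.inclusion (S_mono F h.le))
  map_id z := by ext f; rfl
  map_comp f g := by ext x; rfl

/-- The counit map on the big product. -/
noncomputable def πapp (z : P) :
    (Π i : Fin (Fintype.card P), F.obj (idx i)) →ₗ[𝔽] F.obj z :=
  ∑ i : Fin (Fintype.card P),
    if h : idx i ≤ z then
      ((F.map (homOfLE h)).hom).comp (LinearMap.proj i)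
    else 0

lemma πapp_apply (z : P) (f : Π i : Fin (Fintype.card P), F.obj (idx i)) :
    πapp F z f = ∑ i : Fin (Fintype.card P),
      if h : idx i ≤ z then F.map (homOfLE h) (f i) else 0 := by
  rw [πapp, LinearMap.sum_apply]
  refine Finset.sum_congr rfl fun i _ => ?_
  by_cases h : idx i ≤ z
  · rw [dif_pos h, dif_pos h]; rfl
  · rw [dif_neg h, dif_neg h]; rfl

lemma πapp_naturality {z z' : P} (h : z ≤ z')
    {f : Π i : Fin (Fintype.card P), F.obj (idx i)} (hf : f ∈ S F z) :
    πapp F z' f = F.map (homOfLE h) (πapp F z f) := by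
  rw [πapp_apply, πapp_apply, map_sum]
  refine Finset.sum_congr rfl fun i _ => ?_
  by_cases hi : idx i ≤ z
  · rw [dif_pos hi, dif_pos (hi.trans h)]
    have hc : F.map (homOfLE hi) ≫ F.map (homOfLE h) = F.map (homOfLE (hi.trans h)) := by
      rw [← F.map_comp]
      congr 1
    exact (ConcreteCategory.congr_hom hc (f i)).symm
  · rw [dif_neg hi]
    by_cases hi' : idx i ≤ z'
    · rw [dif_pos hi', (mem_S F).mp hf i hi, map_zero, map_zero]
    · rw [dif_neg hi', map_zero]

lemma πapp_surjective (z : P) (v : F.obj z) :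
    ∃ f ∈ S F z, πapp F z f = v := by
  classical
  set j : Fin (Fintype.card P) := (idx (P := P)).symm z with hj
  have hz : idx j = z := (idx (P := P)).apply_symm_apply z
  set v' : F.obj (idx j) := F.map (homOfLE hz.ge) v with hv'
  refine ⟨Function.update (fun i => (0 : F.obj (idx i))) j v', ?_, ?_⟩
  · rw [mem_S]
    intro i hi
    have hij : i ≠ j := by
      intro hij; subst hij; exact hi hz.le
    exact Function.update_of_ne hij v' (fun i => (0 : F.obj (idx i)))
  · rw [πapp_apply]
    rw [Finset.sum_eq_single j]
    · rw [dif_pos hz.le, Function.update_self, hv']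
      have hc : F.map (homOfLE hz.ge) ≫ F.map (homOfLE hz.le) = 𝟙 (F.obj z) := by
        rw [← F.map_comp, ← F.map_id]
        congr 1
      exact ConcreteCategory.congr_hom hc v
    · intro i _ hij
      by_cases h : idx i ≤ z
      · rw [dif_pos h, Function.update_of_ne hij, map_zero]
      · rw [dif_neg h]
    · intro h; exact absurd (Finset.mem_univ j) h

/-- The counit natural transformation `G ⟶ F`. -/
noncomputable def π : G F ⟶ F where
  app z := ModuleCat.ofHom ((πapp F z).comp (S F z).subtype)
  naturality z z' h := by
    ext f
    exact πapp_naturality F h.le f.2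

instance (z : P) : Epi ((π F).app z) := by
  rw [ModuleCat.epi_iff_surjective]
  intro v
  obtain ⟨f, hf, hfv⟩ := πapp_surjective F z v
  exact ⟨⟨f, hf⟩, hfv⟩

instance : Epi (π F) := NatTrans.epi_of_epi_app _

end ProjFunAux

/-- Let `P` be a finite distributive lattice, `𝔽` a field, and `F : P ⥤ Vec_𝔽` a
projective object of `Fun(P, Vec_𝔽)`. Then `F` is monomorphic (all structure maps are
monomorphisms) and every square `F(x ⊓ y), F(x), F(y), F(x ⊔ y)` is a pullback. -/
theorem projective_functor_mono_and_pullback {P : Type*} [DistribLattice P] [Fintype P]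
    {𝔽 : Type*} [Field 𝔽] (F : P ⥤ ModuleCat 𝔽) (hF : Projective F) :
    (∀ {x y : P} (h : x ≤ y), Mono (F.map (homOfLE h))) ∧
      (∀ x y : P, IsPullback (F.map (homOfLE (inf_le_left : x ⊓ y ≤ x)))
        (F.map (homOfLE (inf_le_right : x ⊓ y ≤ y)))
        (F.map (homOfLE (le_sup_left : x ≤ x ⊔ y)))
        (F.map (homOfLE (le_sup_right : y ≤ x ⊔ y)))) := by
  set σ : F ⟶ ProjFunAux.G F := Projective.factorThru (𝟙 F) (ProjFunAux.π F) with hσdef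
  have hσ : σ ≫ ProjFunAux.π F = 𝟙 F := Projective.factorThru_comp _ _
  -- retraction pointwise
  have hretr : ∀ (z : P) (a : F.obj z), ProjFunAux.πapp F z ((σ.app z a).1) = a := by
    intro z a
    have h1 := congrArg (fun t => t.app z) hσ
    exact ConcreteCategory.congr_hom h1 a
  -- naturality of σ on underlying elements
  have hσnat : ∀ {z z' : P} (h : z ≤ z') (a : F.obj z),
      ((σ.app z' (F.map (homOfLE h) a)).1) = (σ.app z a).1 := by
    intro z z' h a
    have h1 := σ.naturality (homOfLE h)
    have h2 := ConcreteCategory.congr_hom h1 a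
    exact congrArg Subtype.val h2
  have hmono : ∀ {x y : P} (h : x ≤ y), Mono (F.map (homOfLE h)) := by
    intro x y h
    rw [ModuleCat.mono_iff_injective]
    intro a b hab
    have h1 : ((σ.app x a).1) = (σ.app x b).1 := by
      rw [← hσnat h a, ← hσnat h b, hab]
    calc a = ProjFunAux.πapp F x ((σ.app x a).1) := (hretr x a).symm
      _ = ProjFunAux.πapp F x ((σ.app x b).1) := by rw [h1]
      _ = b := hretr x b
  refine ⟨hmono, fun x y => ?_⟩
  have comm : F.map (homOfLE (inf_le_left : x ⊓ y ≤ x)) ≫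
      F.map (homOfLE (le_sup_left : x ≤ x ⊔ y)) =
      F.map (homOfLE (inf_le_right : x ⊓ y ≤ y)) ≫
      F.map (homOfLE (le_sup_right : y ≤ x ⊔ y)) := by
    rw [← F.map_comp, ← F.map_comp]
    congr 1
  refine IsPullback.of_isLimit' ⟨comm⟩ ?_
  have hinj : Function.Injective (F.map (homOfLE (inf_le_left : x ⊓ y ≤ x))) :=
    (ModuleCat.mono_iff_injective _).mp (hmono _)
  have hkey : ∀ (s : PullbackCone (F.map (homOfLE (le_sup_left : x ≤ x ⊔ y)))
      (F.map (homOfLE (le_sup_right : y ≤ x ⊔ y)))) (w : s.pt),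
      ((σ.app x (s.fst w)).1) = (σ.app y (s.snd w)).1 := by
    intro s w
    have hcond := ConcreteCategory.congr_hom s.condition w
    rw [← hσnat le_sup_left (s.fst w), ← hσnat le_sup_right (s.snd w)]
    exact congrArg (fun t => (σ.app (x ⊔ y) t).1) hcond
  have hmem : ∀ (s : PullbackCone (F.map (homOfLE (le_sup_left : x ≤ x ⊔ y)))
      (F.map (homOfLE (le_sup_right : y ≤ x ⊔ y)))) (w : s.pt),
      ((σ.app x (s.fst w)).1) ∈ ProjFunAux.S F (x ⊓ y) := by
    intro s w
    rw [ProjFunAux.mem_S]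
    intro i hi
    rw [le_inf_iff, not_and_or] at hi
    rcases hi with hi | hi
    · exact (ProjFunAux.mem_S F).mp (σ.app x (s.fst w)).2 i hi
    · rw [hkey s w]
      exact (ProjFunAux.mem_S F).mp (σ.app y (s.snd w)).2 i hi
  refine PullbackCone.IsLimit.mk comm
    (fun s => ModuleCat.ofHom ((ProjFunAux.πapp F (x ⊓ y)).comp
      (((ProjFunAux.S F x).subtype.comp (σ.app x).hom).comp
        s.fst.hom))) ?_ ?_ ?_
  · -- fac_left
    intro s
    ext w
    show F.map (homOfLE (inf_le_left : x ⊓ y ≤ x))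
        (ProjFunAux.πapp F (x ⊓ y) ((σ.app x (s.fst w)).1)) = s.fst w
    rw [← ProjFunAux.πapp_naturality F inf_le_left (hmem s w)]
    exact hretr x (s.fst w)
  · -- fac_right
    intro s
    ext w
    show F.map (homOfLE (inf_le_right : x ⊓ y ≤ y))
        (ProjFunAux.πapp F (x ⊓ y) ((σ.app x (s.fst w)).1)) = s.snd w
    rw [← ProjFunAux.πapp_naturality F inf_le_right (hmem s w), hkey s w]
    exact hretr y (s.snd w)
  · -- uniqueness
    intro s m hm1 hm2
    ext w
    apply hinj
    show F.map (homOfLE (inf_le_left : x ⊓ y ≤ x)) (m w) =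
      F.map (homOfLE (inf_le_left : x ⊓ y ≤ x))
        (ProjFunAux.πapp F (x ⊓ y) ((σ.app x (s.fst w)).1))
    have e1 := ConcreteCategory.congr_hom hm1 w
    simp only [ConcreteCategory.comp_apply] at e1
    rw [e1, ← ProjFunAux.πapp_naturality F inf_le_left (hmem s w)]
    exact (hretr x (s.fst w)).symm
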